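/- arXiv:2303.02613 — 4 statements merged into one kernel-verified Lean document; each statement's English description precedes it below -/
import Mathlib

section
/- Let d_max ∈ (0,1), let X_min, X_max be reals with -1 < X_min < 0 < X_max, and let N be a positive integer. Let X(0),...,X(N-1) be any reals with X_min ≤ X(k) ≤ X_max and r_f(0),...,r_f(N-1) any reals with 0 ≤ r_f(k) ≤ X_max. Let V(0) > 0 and let u(0),...,u(N-1) be reals with V(k+1) = V(k) + u(k)·X(k) + (V(k) − u(k))·r_f(k). If for every k ≤ N−1 the investment satisfies −((M(k) + r_f(k))/(X_max − r_f(k)))·V(k) ≤ u(k) ≤ ((M(k) + r_f(k))/(|X_min| + r_f(k)))·V(k), where d(k) = (V_max(k) − V(k))/V_max(k), V_max(k) = max_{0≤i≤k} V(i), and M(k) = (d_max − d(k))/(1 − d(k)), then d(k) ≤ d_max for all 0 ≤ k ≤ N. -/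
/-- The running maximum `V_max(k) = max_{0 ≤ i ≤ k} V(i)` of the account value. -/
noncomputable def runMax (V : ℕ → ℝ) (k : ℕ) : ℝ :=
  (Finset.range (k + 1)).sup' (Finset.nonempty_range_iff.mpr k.succ_ne_zero) V

/-- The percentage drawdown `d(k) = (V_max(k) − V(k)) / V_max(k)`. -/
noncomputable def drawdown (V : ℕ → ℝ) (k : ℕ) : ℝ :=
  (runMax V k - V k) / runMax V k

/-- The modulation function `M(k) = (d_max − d(k)) / (1 − d(k))`. -/
noncomputable def modFn (dmax : ℝ) (V : ℕ → ℝ) (k : ℕ) : ℝ :=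
  (dmax - drawdown V k) / (1 - drawdown V k)

lemma self_le_runMax (V : ℕ → ℝ) (k : ℕ) : V k ≤ runMax V k :=
  Finset.le_sup' V (Finset.self_mem_range_succ k)

lemma zero_le_runMax' (V : ℕ → ℝ) (k : ℕ) : V 0 ≤ runMax V k :=
  Finset.le_sup' V (Finset.mem_range.mpr (Nat.succ_pos k))

lemma runMax_succ (V : ℕ → ℝ) (k : ℕ) :
    runMax V (k + 1) = max (V (k + 1)) (runMax V k) := by
  apply le_antisymm
  · apply Finset.sup'_le
    intro i hi
    rcases Finset.mem_range_succ_iff.mp hi |>.lt_or_eq with h | h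
    · exact le_max_of_le_right (Finset.le_sup' V (Finset.mem_range.mpr h))
    · rw [h]; exact le_max_left _ _
  · apply max_le
    · exact Finset.le_sup' V (Finset.self_mem_range_succ (k+1))
    · apply Finset.sup'_le
      intro i hi
      exact Finset.le_sup' V (Finset.mem_range.mpr (lt_trans (Finset.mem_range.mp hi) (Nat.lt_succ_self _)))

lemma runMax_zero (V : ℕ → ℝ) : runMax V 0 = V 0 := by
  simp [runMax]

/-- sufficiency of the drawdown modulation bounds for the
drawdown guarantee `d(k) ≤ d_max` for all `0 ≤ k ≤ N`. -/
theorem drawdown_modulation_sufficiency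
    (dmax Xmin Xmax : ℝ)
    (hdmax0 : 0 < dmax) (hdmax1 : dmax < 1)
    (hXmin1 : -1 < Xmin) (hXmin0 : Xmin < 0) (hXmax : 0 < Xmax)
    (N : ℕ) (hN : 0 < N)
    (X rf u V : ℕ → ℝ)
    (hX : ∀ k < N, Xmin ≤ X k ∧ X k ≤ Xmax)
    (hrf : ∀ k < N, 0 ≤ rf k ∧ rf k ≤ Xmax)
    (hV0 : 0 < V 0)
    (hdyn : ∀ k < N, V (k + 1) = V k + u k * X k + (V k - u k) * rf k)
    (hu : ∀ k < N,
      -((modFn dmax V k + rf k) / (Xmax - rf k)) * V k ≤ u k ∧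
      u k ≤ ((modFn dmax V k + rf k) / (|Xmin| + rf k)) * V k) :
    ∀ k ≤ N, drawdown V k ≤ dmax := by
  intro k hk
  induction k with
  | zero =>
    simp [drawdown, runMax_zero]
    positivity
  | succ k ih =>
    have hkN : k < N := hk
    have hd : drawdown V k ≤ dmax := ih (le_of_lt hkN)
    -- basic facts at time k
    have hR : 0 < runMax V k := lt_of_lt_of_le hV0 (zero_le_runMax' V k)
    have hd0 : 0 ≤ drawdown V k := by
      unfold drawdown
      exact div_nonneg (by linarith [self_le_runMax V k]) hR.le
    set d := drawdown V k with hdd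
    set M := modFn dmax V k with hMM
    set R := runMax V k with hRR
    have hVk : V k = (1 - d) * R := by
      have : d * R = R - V k := by
        rw [hdd, drawdown, div_mul_cancel₀ _ (ne_of_gt hR)]
      linarith [this]
    have hd1 : d < 1 := lt_of_le_of_lt hd hdmax1
    have hVkpos : 0 < V k := by rw [hVk]; exact mul_pos (by linarith) hR
    have hM0 : 0 ≤ M := by
      rw [hMM, modFn, ← hdd]
      apply div_nonneg <;> linarith
    have h1d : (1:ℝ) - d ≠ 0 := by linarith
    have h1M : 1 - M = (1 - dmax) / (1 - d) := by
      rw [hMM, modFn, ← hdd]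
      field_simp
      ring
    have hrf0 := (hrf k hkN).1
    have hrf1 := (hrf k hkN).2
    have hX1 := (hX k hkN).1
    have hX2 := (hX k hkN).2
    have habs : |Xmin| = -Xmin := abs_of_neg hXmin0
    -- key inequality: u k * (X k - rf k) ≥ -(M + rf k) * V k
    have hkey : -(M + rf k) * V k ≤ u k * (X k - rf k) := by
      rcases le_or_gt 0 (u k) with hu0 | hu0
      · -- long position
        have h1 : u k * (Xmin - rf k) ≤ u k * (X k - rf k) := by
          apply mul_le_mul_of_nonneg_left _ hu0
          linarith
        have h2 : u k * (|Xmin| + rf k) ≤ (M + rf k) * V k := by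
          have := (hu k hkN).2
          have hpos : 0 < |Xmin| + rf k := by rw [habs]; linarith
          calc u k * (|Xmin| + rf k)
              ≤ ((M + rf k) / (|Xmin| + rf k)) * V k * (|Xmin| + rf k) := by
                apply mul_le_mul_of_nonneg_right this (le_of_lt hpos)
            _ = (M + rf k) * V k := by field_simp
        have : u k * (Xmin - rf k) = -(u k * (|Xmin| + rf k)) := by
          rw [habs]; ring
        linarith
      · -- short position; then Xmax - rf k must be positive
        rcases eq_or_lt_of_le hrf1 with heq | hlt
        · exfalso
          have := (hu k hkN).1
          rw [← heq] at this
          simp at this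
          nlinarith
        · have h1 : u k * (Xmax - rf k) ≤ u k * (X k - rf k) := by
            apply mul_le_mul_of_nonpos_left _ (le_of_lt hu0)
            linarith
          have h2 : -(M + rf k) * V k ≤ u k * (Xmax - rf k) := by
            have hlhs := (hu k hkN).1
            have hpos : 0 < Xmax - rf k := by linarith
            calc -(M + rf k) * V k
                = (-((M + rf k) / (Xmax - rf k)) * V k) * (Xmax - rf k) := by
                  field_simp
              _ ≤ u k * (Xmax - rf k) :=
                  mul_le_mul_of_nonneg_right hlhs (le_of_lt hpos)
          linarith
    -- lower bound on V (k+1)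
    have hVsucc : (1 - dmax) * R ≤ V (k + 1) := by
      have hdynk := hdyn k hkN
      have hexp : V (k + 1) = V k * (1 + rf k) + u k * (X k - rf k) := by
        rw [hdynk]; ring
      have : V k * (1 - M) ≤ V (k + 1) := by
        rw [hexp]
        nlinarith [hkey]
      calc (1 - dmax) * R = V k * (1 - M) := by
            rw [hVk, h1M]
            field_simp
        _ ≤ V (k + 1) := this
    -- conclude
    have hVsuccpos : 0 < V (k + 1) := lt_of_lt_of_le (mul_pos (by linarith) hR) hVsucc
    have hR' : runMax V (k + 1) = max (V (k + 1)) R := runMax_succ V k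
    have hR'pos : 0 < runMax V (k + 1) := lt_of_lt_of_le hV0 (zero_le_runMax' V (k + 1))
    have hkey2 : (1 - dmax) * runMax V (k + 1) ≤ V (k + 1) := by
      rw [hR']
      rcases max_cases (V (k + 1)) R with ⟨h, _⟩ | ⟨h, _⟩
      · rw [h]; nlinarith
      · rw [h]; exact hVsucc
    rw [drawdown, div_le_iff₀ hR'pos]
    nlinarith [hkey2]
end

section
/- Let d_max ∈ (0,1), let X_min, X_max be reals with -1 < X_min < 0 < X_max, and let r_f ∈ [0, X_max]. Suppose V > 0, V_max ≥ V, let d = (V_max − V)/V_max and assume d ≤ d_max, and let u ≥ 0. If the one-step updated value V' = V + u·X_min + (V − u)·r_f with unchanged running maximum V_max satisfies (V_max − V')/V_max ≤ d_max, then u ≤ ((M + r_f)/(|X_min| + r_f))·V, where M = (d_max − d)/(1 − d). -/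
/-- one-step necessity of the upper modulation bound for a long
position `u ≥ 0`, under the worst-case return `X_min`. -/
theorem drawdown_modulation_necessity_long
    (dmax Xmin Xmax rf V Vmax u : ℝ)
    (hdmax0 : 0 < dmax) (hdmax1 : dmax < 1)
    (hXmin1 : -1 < Xmin) (hXmin0 : Xmin < 0) (hXmax : 0 < Xmax)
    (hrf0 : 0 ≤ rf) (hrf1 : rf ≤ Xmax)
    (hV : 0 < V) (hVmax : V ≤ Vmax)
    (d : ℝ) (hd : d = (Vmax - V) / Vmax) (hddmax : d ≤ dmax)
    (hu : 0 ≤ u)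
    (V' : ℝ) (hV' : V' = V + u * Xmin + (V - u) * rf)
    (hnext : (Vmax - V') / Vmax ≤ dmax)
    (M : ℝ) (hM : M = (dmax - d) / (1 - d)) :
    u ≤ ((M + rf) / (|Xmin| + rf)) * V := by
  have hVmax0 : 0 < Vmax := lt_of_lt_of_le hV hVmax
  have hMV : M * V = dmax * Vmax - (Vmax - V) := by
    rw [hM, hd]
    field_simp
    rw [sub_sub_cancel]
    exact mul_div_cancel_left₀ _ hV.ne'
  have hnext' : Vmax - V' ≤ dmax * Vmax := by
    rwa [div_le_iff₀ hVmax0] at hnext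
  rw [abs_of_neg hXmin0, div_mul_eq_mul_div, le_div_iff₀ (by linarith)]
  nlinarith [hnext', hMV, hV']
end

section
/- Let d_max ∈ (0,1), let X_min, X_max be reals with -1 < X_min < 0 < X_max, and let r_f ∈ [0, X_max) with r_f < X_max. Suppose V > 0, V_max ≥ V, let d = (V_max − V)/V_max and assume d ≤ d_max, and let u < 0. If the one-step updated value V' = V + u·X_max + (V − u)·r_f with unchanged running maximum V_max satisfies (V_max − V')/V_max ≤ d_max, then u ≥ −((M + r_f)/(X_max − r_f))·V, where M = (d_max − d)/(1 − d). -/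
/-- one-step necessity of the lower modulation bound for a short
position `u < 0`, under the worst-case return `X_max`. -/
theorem drawdown_modulation_necessity_short
    (dmax Xmin Xmax rf V Vmax u : ℝ)
    (hdmax0 : 0 < dmax) (hdmax1 : dmax < 1)
    (hXmin1 : -1 < Xmin) (hXmin0 : Xmin < 0) (hXmax : 0 < Xmax)
    (hrf0 : 0 ≤ rf) (hrf1 : rf < Xmax)
    (hV : 0 < V) (hVmax : V ≤ Vmax)
    (d : ℝ) (hd : d = (Vmax - V) / Vmax) (hddmax : d ≤ dmax)
    (hu : u < 0)
    (V' : ℝ) (hV' : V' = V + u * Xmax + (V - u) * rf)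
    (hnext : (Vmax - V') / Vmax ≤ dmax)
    (M : ℝ) (hM : M = (dmax - d) / (1 - d)) :
    -((M + rf) / (Xmax - rf)) * V ≤ u := by
  have hVmax0 : 0 < Vmax := lt_of_lt_of_le hV hVmax
  have h1d : 1 - d = V / Vmax := by rw [hd]; field_simp; ring
  have h1d0 : 0 < 1 - d := by rw [h1d]; positivity
  have hMv : M * V = (dmax - d) * Vmax := by
    rw [hM, h1d]
    field_simp
  have hXr : 0 < Xmax - rf := by linarith
  have hnext' : Vmax - V' ≤ dmax * Vmax := by
    rw [div_le_iff₀ hVmax0] at hnext; linarith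
  have hdv : d * Vmax = Vmax - V := by rw [hd]; field_simp
  rw [neg_mul, neg_le, div_mul_eq_mul_div, le_div_iff₀ hXr]
  nlinarith [hMv, hnext', hdv]
end

section
/- Let d_max ∈ (0,1), X_min, X_max reals with -1 < X_min < 0 < X_max, and r_f ∈ [0, X_max]. Suppose V > 0, V_max ≥ V, d = (V_max − V)/V_max ≤ d_max, M = (d_max − d)/(1 − d), and u satisfies −((M + r_f)/(X_max − r_f))·V ≤ u ≤ ((M + r_f)/(|X_min| + r_f))·V. Then for every X ∈ [X_min, X_max], the updated value V' = V + u·X + (V − u)·r_f satisfies (V_max − V')/V_max ≤ d + M·(1 − d) = d_max; in particular, if the running maximum is unchanged (V' ≤ V_max), the new drawdown is at most d_max. -/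
set_option maxHeartbeats 1000000 in
/-- one-step sufficiency of the modulation bounds: under any
realizable return `X ∈ [X_min, X_max]`, the next-step drawdown (with running
maximum `V_max` unchanged) is at most `d + M·(1 − d) = d_max`. -/
theorem drawdown_modulation_one_step_sufficiency
    (dmax Xmin Xmax rf V Vmax u : ℝ)
    (hdmax0 : 0 < dmax) (hdmax1 : dmax < 1)
    (hXmin1 : -1 < Xmin) (hXmin0 : Xmin < 0) (hXmax : 0 < Xmax)
    (hrf0 : 0 ≤ rf) (hrf1 : rf ≤ Xmax)
    (hV : 0 < V) (hVmax : V ≤ Vmax)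
    (d : ℝ) (hd : d = (Vmax - V) / Vmax) (hddmax : d ≤ dmax)
    (M : ℝ) (hM : M = (dmax - d) / (1 - d))
    (hu_lo : -((M + rf) / (Xmax - rf)) * V ≤ u)
    (hu_hi : u ≤ ((M + rf) / (|Xmin| + rf)) * V) :
    ∀ X : ℝ, Xmin ≤ X → X ≤ Xmax →
      (Vmax - (V + u * X + (V - u) * rf)) / Vmax ≤ d + M * (1 - d) ∧
      d + M * (1 - d) = dmax := by
  intro X hX1 hX2
  have hVmax0 : 0 < Vmax := lt_of_lt_of_le hV hVmax
  have h1d : (1 - d) * Vmax = V := by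
    rw [hd]; field_simp; ring
  have h1d0 : 0 < 1 - d := by
    have := mul_pos_iff.mp (h1d ▸ hV)
    rcases this with ⟨h, _⟩ | ⟨_, h⟩
    · exact h
    · linarith
  have hMval : M * (1 - d) = dmax - d := by
    rw [hM]; field_simp
  have heq : d + M * (1 - d) = dmax := by rw [hMval]; ring
  have hM0 : 0 ≤ M := by
    rw [hM]; exact div_nonneg (by linarith) (by linarith)
  have habs : |Xmin| = -Xmin := abs_of_neg hXmin0
  have habs0 : 0 < |Xmin| + rf := by rw [habs]; linarith
  -- key inequality
  have key : -(M + rf) * V ≤ u * (X - rf) := by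
    rcases le_or_gt rf X with hc | hc
    · rcases le_or_gt 0 u with hu | hu
      · have h1 : 0 ≤ u * (X - rf) := mul_nonneg hu (by linarith)
        nlinarith
      · rcases eq_or_lt_of_le hrf1 with he | he
        · rw [← he] at hu_lo
          simp at hu_lo
          nlinarith
        · have hne : (Xmax - rf) ≠ 0 := ne_of_gt (by linarith)
          have hx : (M + rf) / (Xmax - rf) * V * (Xmax - rf) = (M + rf) * V := by
            field_simp
          have h2 : -(M + rf) * V ≤ u * (Xmax - rf) := by
            have h := mul_le_mul_of_nonneg_right hu_lo (le_of_lt (by linarith : (0:ℝ) < Xmax - rf))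
            nlinarith [hx, h]
          nlinarith [mul_le_mul_of_nonpos_left (by linarith : X - rf ≤ Xmax - rf) (le_of_lt hu)]
    · rcases le_or_gt u 0 with hu | hu
      · have h1 : 0 ≤ u * (X - rf) := by nlinarith [mul_nonneg (neg_nonneg.mpr hu) (by linarith : (0:ℝ) ≤ rf - X)]
        nlinarith
      · have hx : (M + rf) / (|Xmin| + rf) * V * (|Xmin| + rf) = (M + rf) * V := by
          field_simp
        have h2 : u * (|Xmin| + rf) ≤ (M + rf) * V := by
          have h := mul_le_mul_of_nonneg_right hu_hi (le_of_lt habs0)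
          linarith [hx, h]
        have h3 : u * (Xmin - rf) ≤ u * (X - rf) :=
          mul_le_mul_of_nonneg_left (by linarith) (le_of_lt hu)
        rw [habs] at h2
        nlinarith
  refine ⟨?_, heq⟩
  rw [heq, div_le_iff₀ hVmax0]
  have h4 : M * ((1 - d) * Vmax) = M * V := by rw [h1d]
  have h5 : M * (1 - d) * Vmax = (dmax - d) * Vmax := by rw [hMval]
  nlinarith [key, h4, h5, h1d]
end
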